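/- Let M be an n×n integer matrix and D a finite digit set containing a word z ∈ D* of odd length representing the zero vector. Fix j ∈ {1,...,n}. Suppose there exist words t, u ∈ D* representing vectors (τ_1,...,τ_{j-1}, T, 0,...,0)^T and (υ_1,...,υ_{j-1}, U, 0,...,0)^T with gcd(T, U) = 1, where M = J_n(-1). Then for every V ∈ Z there exists a word v ∈ D* representing a vector of the form (ν_1,...,ν_{j-1}, V, 0,...,0)^T. -/

import Mathlib

/-- The `n × n` Jordan block with eigenvalue `-1`: `-1` on the diagonal, `1` on the
superdiagonal, `0` elsewhere. -/
def Jneg (n : ℕ) : Matrix (Fin n) (Fin n) ℤ :=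
  Matrix.of fun i j => if j = i then -1 else if (j : ℕ) = (i : ℕ) + 1 then 1 else 0

/-- The digit `p = (0, …, 0, 1)ᵀ`. -/
def pvec (n : ℕ) : Fin n → ℤ := fun i => if (i : ℕ) = n - 1 then 1 else 0

/-- The vector represented by a word `d_{k-1} … d_0`, namely `∑ M^i d_i` with `M = Jneg n`. -/
def valJ (n : ℕ) {k : ℕ} (d : Fin k → (Fin n → ℤ)) : Fin n → ℤ :=
  ∑ i : Fin k, ((Jneg n) ^ (i : ℕ)).mulVec (d i)


lemma jneg_step (n j : ℕ) (hj1 : 1 ≤ j) (hjn : j ≤ n) (x : Fin n → ℤ)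
    (hx : ∀ i : Fin n, j ≤ (i : ℕ) → x i = 0) :
    (∀ i : Fin n, j ≤ (i : ℕ) → (Jneg n).mulVec x i = 0) ∧
      (Jneg n).mulVec x ⟨j - 1, by omega⟩ = - x ⟨j - 1, by omega⟩ := by
  constructor
  · intro i hi
    rw [Matrix.mulVec, dotProduct]
    apply Finset.sum_eq_zero
    intro k _
    by_cases h1 : k = i
    · simp [Jneg, h1, hx i hi]
    · by_cases h2 : (k : ℕ) = (i : ℕ) + 1
      · have : x k = 0 := hx k (by omega)
        simp [Jneg, h1, h2, this]
      · simp [Jneg, h1, h2]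
  · rw [Matrix.mulVec, dotProduct]
    rw [Finset.sum_eq_single (⟨j - 1, by omega⟩ : Fin n)]
    · simp [Jneg]
    · intro k _ hk
      by_cases h2 : (k : ℕ) = (j - 1) + 1
      · have : x k = 0 := hx k (by omega)
        simp [Jneg, hk, this]
      · have hk' : (k : ℕ) ≠ j - 1 := by
          intro h; exact hk (Fin.ext h)
        simp [Jneg, Fin.ext_iff, hk', h2]
    · simp

lemma jneg_pow (n j : ℕ) (hj1 : 1 ≤ j) (hjn : j ≤ n) (m : ℕ) (x : Fin n → ℤ)
    (hx : ∀ i : Fin n, j ≤ (i : ℕ) → x i = 0) :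
    (∀ i : Fin n, j ≤ (i : ℕ) → ((Jneg n) ^ m).mulVec x i = 0) ∧
      ((Jneg n) ^ m).mulVec x ⟨j - 1, by omega⟩ = (-1) ^ m * x ⟨j - 1, by omega⟩ := by
  induction m with
  | zero =>
    refine ⟨?_, by simp [Matrix.one_mulVec]⟩
    simpa [Matrix.one_mulVec] using hx
  | succ m ih =>
    have h1 : ((Jneg n) ^ (m + 1)).mulVec x = (Jneg n).mulVec (((Jneg n) ^ m).mulVec x) := by
      rw [Matrix.mulVec_mulVec, ← pow_succ']
    have := jneg_step n j hj1 hjn (((Jneg n) ^ m).mulVec x) ih.1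
    constructor
    · intro i hi; rw [h1]; exact this.1 i hi
    · rw [h1, this.2, ih.2]; ring

lemma valJ_append (n m k : ℕ) (e : Fin m → Fin n → ℤ) (d : Fin k → Fin n → ℤ) :
    valJ n (Fin.append e d) = valJ n e + ((Jneg n) ^ m).mulVec (valJ n d) := by
  rw [valJ, Fin.sum_univ_add]
  congr 1
  · simp [valJ]
  · have : ∀ i : Fin k,
        (Jneg n ^ ((Fin.natAdd m i : Fin (m + k)) : ℕ)).mulVec (Fin.append e d (Fin.natAdd m i))
          = ((Jneg n) ^ m).mulVecLin ((Jneg n ^ (i : ℕ)).mulVec (d i)) := by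
      intro i
      simp [Fin.append_right, pow_add, ← Matrix.mulVec_mulVec]
    rw [Finset.sum_congr rfl fun i _ => this i, ← map_sum, valJ, Matrix.mulVecLin_apply]

theorem stmt11 (n : ℕ) (D : Finset (Fin n → ℤ)) (j : ℕ) (hj1 : 1 ≤ j) (hjn : j ≤ n)
    (hz : ∃ (k : ℕ) (z : Fin k → (Fin n → ℤ)),
        (∀ i, z i ∈ D) ∧ Odd k ∧ valJ n z = 0)
    (T U : ℤ) (hTU : Int.gcd T U = 1)
    (ht : ∃ (k : ℕ) (t : Fin k → (Fin n → ℤ)),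
        (∀ i, t i ∈ D) ∧ valJ n t ⟨j - 1, by omega⟩ = T ∧
        ∀ i : Fin n, j ≤ (i : ℕ) → valJ n t i = 0)
    (hu : ∃ (k : ℕ) (u : Fin k → (Fin n → ℤ)),
        (∀ i, u i ∈ D) ∧ valJ n u ⟨j - 1, by omega⟩ = U ∧
        ∀ i : Fin n, j ≤ (i : ℕ) → valJ n u i = 0)
    (V : ℤ) :
    ∃ (k : ℕ) (v : Fin k → (Fin n → ℤ)),
      (∀ i, v i ∈ D) ∧ valJ n v ⟨j - 1, by omega⟩ = V ∧
      ∀ i : Fin n, j ≤ (i : ℕ) → valJ n v i = 0 := by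
  let jj : Fin n := ⟨j - 1, by omega⟩
  let P : ℤ → Prop := fun c => ∃ (k : ℕ) (v : Fin k → (Fin n → ℤ)),
      (∀ i, v i ∈ D) ∧ valJ n v jj = c ∧
      ∀ i : Fin n, j ≤ (i : ℕ) → valJ n v i = 0
  obtain ⟨kz, z, hzD, hzOdd, hzVal⟩ := hz
  -- membership for appended words
  have happD : ∀ {m k : ℕ} (e : Fin m → Fin n → ℤ) (d : Fin k → Fin n → ℤ),
      (∀ i, e i ∈ D) → (∀ i, d i ∈ D) → ∀ i, Fin.append e d i ∈ D := by
    intro m k e d he hd i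
    refine Fin.addCases (motive := fun i => Fin.append e d i ∈ D) ?_ ?_ i
    · intro i; rw [Fin.append_left]; exact he i
    · intro i; rw [Fin.append_right]; exact hd i
  -- parity fix: any representation can be upgraded to an even-length one
  have hEven : ∀ c : ℤ, P c → ∃ (k : ℕ) (v : Fin k → (Fin n → ℤ)),
      Even k ∧ (∀ i, v i ∈ D) ∧ valJ n v jj = c ∧
      ∀ i : Fin n, j ≤ (i : ℕ) → valJ n v i = 0 := by
    rintro c ⟨k, v, hvD, hvj, hv0⟩
    rcases Nat.even_or_odd k with hk | hk
    · exact ⟨k, v, hk, hvD, hvj, hv0⟩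
    · refine ⟨k + kz, Fin.append v z, ?_, happD v z hvD hzD, ?_⟩
      · rcases hk with ⟨a, ha⟩; rcases hzOdd with ⟨b, hb⟩
        exact ⟨a + b + 1, by omega⟩
      · have hval : valJ n (Fin.append v z) = valJ n v := by
          rw [valJ_append, hzVal]
          simp [Matrix.mulVec_zero]
        rw [hval]
        exact ⟨hvj, hv0⟩
  -- closure under addition
  have hAdd : ∀ c c' : ℤ, P c → P c' → P (c + c') := by
    rintro c c' hc ⟨k', v', hv'D, hv'j, hv'0⟩
    obtain ⟨k, v, hkEven, hvD, hvj, hv0⟩ := hEven c hc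
    refine ⟨k + k', Fin.append v v', happD v v' hvD hv'D, ?_, ?_⟩
    · rw [valJ_append]
      have := jneg_pow n j hj1 hjn k (valJ n v') hv'0
      simp only [Pi.add_apply]
      rw [hvj, this.2, hv'j, hkEven.neg_one_pow]
      ring
    · intro i hi
      rw [valJ_append]
      have := jneg_pow n j hj1 hjn k (valJ n v') hv'0
      simp only [Pi.add_apply]
      rw [hv0 i hi, this.1 i hi]
      ring
  -- closure under negation
  have hNeg : ∀ c : ℤ, P c → P (-c) := by
    rintro c ⟨k, v, hvD, hvj, hv0⟩
    refine ⟨kz + k, Fin.append z v, happD z v hzD hvD, ?_, ?_⟩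
    · rw [valJ_append]
      have := jneg_pow n j hj1 hjn kz (valJ n v) hv0
      simp only [Pi.add_apply]
      rw [hzVal, this.2, hvj, hzOdd.neg_one_pow]
      simp
    · intro i hi
      rw [valJ_append]
      have := jneg_pow n j hj1 hjn kz (valJ n v) hv0
      simp only [Pi.add_apply]
      rw [hzVal, this.1 i hi]
      simp
  have hZero : P 0 := by
    refine ⟨0, Fin.elim0, fun i => i.elim0, ?_, fun i _ => ?_⟩ <;>
      simp [valJ]
  -- closure under integer multiples
  have hMul : ∀ (a : ℤ) (c : ℤ), P c → P (a * c) := by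
    intro a c hc
    induction a using Int.induction_on with
    | zero => simpa using hZero
    | succ a ih =>
      have := hAdd _ _ ih hc
      have he : (a + 1 : ℤ) * c = a * c + c := by ring
      rwa [he]
    | pred a ih =>
      have := hAdd _ _ ih (hNeg c hc)
      have he : (-a - 1 : ℤ) * c = -a * c + -c := by ring
      rwa [he]
  obtain ⟨kt, t, htD, htj, ht0⟩ := ht
  obtain ⟨ku, u, huD, huj, hu0⟩ := hu
  have hT : P T := ⟨kt, t, htD, htj, ht0⟩
  have hU : P U := ⟨ku, u, huD, huj, hu0⟩
  have key : P ((V * Int.gcdA T U) * T + (V * Int.gcdB T U) * U) :=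
    hAdd _ _ (hMul _ _ hT) (hMul _ _ hU)
  have hb : T * Int.gcdA T U + U * Int.gcdB T U = 1 := by
    have := Int.gcd_eq_gcd_ab T U
    rw [hTU] at this
    push_cast at this
    linarith
  have : (V * Int.gcdA T U) * T + (V * Int.gcdB T U) * U = V := by
    have : V * (T * Int.gcdA T U + U * Int.gcdB T U) = V * 1 := by rw [hb]
    linarith [this]
  rw [this] at key
  exact key
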